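/- arXiv:2603.24786 — 2 statements merged into one kernel-verified Lean document; each statement's English description precedes it below -/
import Mathlib

section
/- In the setting of the previous decomposition, additionally note $\hat\beta - \beta = \frac{1}{G}\Pi\sum_{g=1}^G X_g'u_g$. Define $\sigma > 0$, $\omega_{1g} = \sigma^{-1}\lambda'\Pi X_g'u_g$, $\omega_{2g} = \sigma^{-1}\begin{pmatrix} I_k \\ X_g'X_g\Pi'\lambda\lambda' \end{pmatrix}\Pi X_g'u_g$, $\omega_{3g} = \sigma^{-2}\left((\lambda'\Pi X_g'u_g)^2 - \sigma_g^2\right)$ where $\sigma^2 = \frac{1}{G}\sum_g \sigma_g^2$, and the $2k \times 2k$ matrix $\Gamma = \begin{pmatrix} -\frac{1}{G}\sum_g X_g'X_g\Pi'\lambda\lambda'\Pi X_g'X_g & I_k \\ I_k & O \end{pmatrix}$. Then with $\hat\sigma^2 = \frac{1}{G}\sum_g(\lambda'\Pi X_g'\hat u_g)^2$, one has $\frac{\hat\sigma^2}{\sigma^2} = 1 - \left(\frac{1}{G}\sum_{g=1}^G\omega_{2g}\right)'\Gamma\left(\frac{1}{G}\sum_{g=1}^G\omega_{2g}\right) + \frac{1}{G}\sum_{g=1}^G\omega_{3g}$.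 -/
open Matrix Finset

lemma my_vecMulVec_mulVec {n : Type*} [Fintype n] (w v x : n → ℝ) :
    vecMulVec w v *ᵥ x = (v ⬝ᵥ x) • w := by
  ext i
  simp only [vecMulVec_apply, mulVec, dotProduct, Pi.smul_apply, smul_eq_mul, Finset.sum_mul]
  exact Finset.sum_congr rfl fun j _ => by ring

lemma my_mulVec_sum {m n ι : Type*} [Fintype n] [Fintype ι] (M : Matrix m n ℝ)
    (f : ι → n → ℝ) : M *ᵥ (∑ g, f g) = ∑ g, M *ᵥ f g := by
  ext i
  simp only [mulVec, dotProduct, Finset.sum_apply, Finset.mul_sum]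
  exact Finset.sum_comm

lemma my_sum_mulVec {m n ι : Type*} [Fintype n] [Fintype ι] (M : ι → Matrix m n ℝ)
    (v : n → ℝ) : (∑ g, M g) *ᵥ v = ∑ g, M g *ᵥ v := by
  ext i
  simp only [mulVec, dotProduct, Matrix.sum_apply, Finset.sum_apply, Finset.sum_mul]
  exact Finset.sum_comm

lemma my_dotProduct_sum {n ι : Type*} [Fintype n] [Fintype ι] (v : n → ℝ)
    (f : ι → n → ℝ) : v ⬝ᵥ (∑ g, f g) = ∑ g, v ⬝ᵥ f g := by
  simp only [dotProduct, Finset.sum_apply, Finset.mul_sum]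
  exact Finset.sum_comm

/-- Lemma 1 of the paper (squared form): with the per-cluster scores
`ω₂g = σ⁻¹ (I_k ; X_g'X_g Π λ λ') Π X_g'u_g`,
`ω₃g = σ⁻² ((λ'Π X_g'u_g)² - σ_g²)`, the block matrix
`Γ = [ -(1/G)∑ X_g'X_g Π λ λ' Π X_g'X_g , I ; I , 0 ]`,
and `σ² = (1/G)∑ σ_g²`, the studentization factor satisfies
`σ̂²/σ² = 1 - W₂'Γ W₂ + (1/G)∑ ω₃g`, where `W₂ = (1/G)∑ ω₂g`. -/
theorem cluster_variance_quadratic_form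
    (G k : ℕ) (hG : 0 < G) (N : Fin G → ℕ)
    (X : ∀ g : Fin G, Matrix (Fin (N g)) (Fin k) ℝ)
    (Y u : ∀ g : Fin G, Fin (N g) → ℝ)
    (β lam : Fin k → ℝ)
    (hmodel : ∀ g, Y g = X g *ᵥ β + u g)
    (S : Matrix (Fin k) (Fin k) ℝ) (hS : S = ∑ g, (X g)ᵀ * X g)
    (hinv : IsUnit S.det)
    (βhat : Fin k → ℝ) (hβhat : βhat = S⁻¹ *ᵥ (∑ g, (X g)ᵀ *ᵥ Y g))
    (Pm : Matrix (Fin k) (Fin k) ℝ) (hPm : Pm = ((G : ℝ)⁻¹ • S)⁻¹)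
    (uhat : ∀ g : Fin G, Fin (N g) → ℝ) (huhat : ∀ g, uhat g = Y g - X g *ᵥ βhat)
    (σ : ℝ) (hσ : 0 < σ)
    (σg2 : Fin G → ℝ) (hσ2 : σ ^ 2 = (G : ℝ)⁻¹ * ∑ g, σg2 g)
    (σhat2 : ℝ)
    (hσhat2 : σhat2 = (G : ℝ)⁻¹ * ∑ g, (lam ⬝ᵥ (Pm *ᵥ ((X g)ᵀ *ᵥ uhat g))) ^ 2)
    (ω₂ : Fin G → (Fin k ⊕ Fin k) → ℝ)
    (hω₂ : ∀ g, ω₂ g = Sum.elim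
        (σ⁻¹ • (Pm *ᵥ ((X g)ᵀ *ᵥ u g)))
        (σ⁻¹ • ((lam ⬝ᵥ (Pm *ᵥ ((X g)ᵀ *ᵥ u g))) • (((X g)ᵀ * X g) *ᵥ (Pm *ᵥ lam)))))
    (ω₃ : Fin G → ℝ)
    (hω₃ : ∀ g, ω₃ g = (σ ^ 2)⁻¹ * ((lam ⬝ᵥ (Pm *ᵥ ((X g)ᵀ *ᵥ u g))) ^ 2 - σg2 g))
    (Γ : Matrix (Fin k ⊕ Fin k) (Fin k ⊕ Fin k) ℝ)
    (hΓ : Γ = Matrix.fromBlocks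
        (-((G : ℝ)⁻¹ • ∑ g, (X g)ᵀ * X g * Pm * vecMulVec lam lam * Pm * ((X g)ᵀ * X g)))
        1 1 0) :
    σhat2 / σ ^ 2
      = 1 - ((G : ℝ)⁻¹ • ∑ g, ω₂ g) ⬝ᵥ (Γ *ᵥ ((G : ℝ)⁻¹ • ∑ g, ω₂ g))
        + (G : ℝ)⁻¹ * ∑ g, ω₃ g := by
  have hGne : (G : ℝ) ≠ 0 := Nat.cast_ne_zero.mpr hG.ne'
  have hσne : σ ≠ 0 := hσ.ne'
  -- abbreviations
  set a : Fin G → Fin k → ℝ := fun g => Pm *ᵥ ((X g)ᵀ *ᵥ u g) with ha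
  set s : Fin G → ℝ := fun g => lam ⬝ᵥ a g with hs
  set c : Fin G → Fin k → ℝ := fun g => ((X g)ᵀ * X g) *ᵥ (Pm *ᵥ lam) with hc
  set b : Fin k → ℝ := S⁻¹ *ᵥ (∑ g, (X g)ᵀ *ᵥ u g) with hbdef
  set e : Fin k → ℝ := (G : ℝ)⁻¹ • ∑ g, s g • c g with hedef
  -- basic symmetry facts
  have hSsym : Sᵀ = S := by
    rw [hS, Matrix.transpose_sum]
    simp [Matrix.transpose_mul]
  have hMsym : ∀ g : Fin G, ((X g)ᵀ * X g)ᵀ = (X g)ᵀ * X g := by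
    intro g; simp [Matrix.transpose_mul]
  have hPsym : Pmᵀ = Pm := by
    rw [hPm, Matrix.transpose_nonsing_inv, Matrix.transpose_smul, hSsym]
  have hPmS : Pm = (G : ℝ) • S⁻¹ := by
    rw [hPm]
    apply Matrix.inv_eq_right_inv
    rw [Matrix.smul_mul, Matrix.mul_smul, smul_smul, inv_mul_cancel₀ hGne, one_smul,
      Matrix.mul_nonsing_inv S hinv]
  -- key transfer lemma
  have hkey : ∀ (g : Fin G) (w : Fin k → ℝ),
      lam ⬝ᵥ (Pm *ᵥ (((X g)ᵀ * X g) *ᵥ w)) = c g ⬝ᵥ w := by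
    intro g w
    rw [Matrix.dotProduct_mulVec, Matrix.dotProduct_mulVec]
    rw [hc]
    congr 1
    rw [← Matrix.mulVec_transpose, ← Matrix.mulVec_transpose, hMsym g, hPsym]
  -- b as average of a
  have hbavg : (G : ℝ)⁻¹ • ∑ g, a g = b := by
    rw [ha, hbdef]
    simp only
    rw [← my_mulVec_sum, hPmS, Matrix.smul_mulVec, smul_smul,
      inv_mul_cancel₀ hGne, one_smul]
  -- βhat decomposition
  have hβd : βhat = β + b := by
    rw [hβhat, hbdef]
    have h1 : ∑ g, (X g)ᵀ *ᵥ Y g = S *ᵥ β + ∑ g, (X g)ᵀ *ᵥ u g := by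
      rw [hS, my_sum_mulVec, ← Finset.sum_add_distrib]
      refine Finset.sum_congr rfl fun g _ => ?_
      rw [hmodel g, Matrix.mulVec_add, Matrix.mulVec_mulVec]
    rw [h1, Matrix.mulVec_add, Matrix.mulVec_mulVec, Matrix.nonsing_inv_mul S hinv,
      Matrix.one_mulVec]
  -- residual scores
  have hterm : ∀ g, lam ⬝ᵥ (Pm *ᵥ ((X g)ᵀ *ᵥ uhat g)) = s g - c g ⬝ᵥ b := by
    intro g
    have h2 : uhat g = u g - X g *ᵥ b := by
      rw [huhat g, hmodel g, hβd, Matrix.mulVec_add]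
      abel
    rw [h2, Matrix.mulVec_sub, Matrix.mulVec_sub, dotProduct_sub,
      Matrix.mulVec_mulVec b (X g)ᵀ (X g), hkey g b]
  -- σhat2 in terms of s, c, b
  have hL : σhat2 = (G : ℝ)⁻¹ * (∑ g, (s g) ^ 2 - 2 * ∑ g, s g * (c g ⬝ᵥ b)
      + ∑ g, (c g ⬝ᵥ b) ^ 2) := by
    rw [hσhat2]
    congr 1
    rw [Finset.mul_sum, ← Finset.sum_sub_distrib, ← Finset.sum_add_distrib]
    refine Finset.sum_congr rfl fun g _ => ?_
    rw [hterm g]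
    ring
  -- sum of ω₂
  have hWsum : (G : ℝ)⁻¹ • ∑ g, ω₂ g = Sum.elim (σ⁻¹ • b) (σ⁻¹ • e) := by
    funext i
    cases i with
    | inl i =>
      have : ∀ g, ω₂ g (Sum.inl i) = σ⁻¹ * a g i := by
        intro g; rw [hω₂ g]; simp [ha]
      simp only [Pi.smul_apply, Finset.sum_apply, smul_eq_mul, this, Sum.elim_inl]
      rw [← Finset.mul_sum, ← hbavg]
      simp only [Pi.smul_apply, Finset.sum_apply, smul_eq_mul]
      ring
    | inr i =>
      have : ∀ g, ω₂ g (Sum.inr i) = σ⁻¹ * (s g • c g) i := by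
        intro g; rw [hω₂ g]; simp [ha, hs, hc]
      simp only [Pi.smul_apply, Finset.sum_apply, smul_eq_mul, this, Sum.elim_inr]
      rw [← Finset.mul_sum, hedef]
      simp only [Pi.smul_apply, Finset.sum_apply, smul_eq_mul]
      ring
  -- quadratic form
  have hAb : (∑ g, (X g)ᵀ * X g * Pm * vecMulVec lam lam * Pm * ((X g)ᵀ * X g)) *ᵥ b
      = ∑ g, (c g ⬝ᵥ b) • c g := by
    rw [my_sum_mulVec]
    refine Finset.sum_congr rfl fun g _ => ?_
    rw [← Matrix.mulVec_mulVec b ((X g)ᵀ * X g * Pm * vecMulVec lam lam * Pm) ((X g)ᵀ * X g),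
      ← Matrix.mulVec_mulVec (((X g)ᵀ * X g) *ᵥ b) ((X g)ᵀ * X g * Pm * vecMulVec lam lam) Pm,
      ← Matrix.mulVec_mulVec (Pm *ᵥ (((X g)ᵀ * X g) *ᵥ b)) ((X g)ᵀ * X g * Pm) (vecMulVec lam lam),
      ← Matrix.mulVec_mulVec (vecMulVec lam lam *ᵥ (Pm *ᵥ (((X g)ᵀ * X g) *ᵥ b))) ((X g)ᵀ * X g) Pm,
      my_vecMulVec_mulVec, Matrix.mulVec_smul, Matrix.mulVec_smul, hkey g b]
  have hbAb : b ⬝ᵥ ((∑ g, (X g)ᵀ * X g * Pm * vecMulVec lam lam * Pm * ((X g)ᵀ * X g)) *ᵥ b)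
      = ∑ g, (c g ⬝ᵥ b) ^ 2 := by
    rw [hAb, my_dotProduct_sum]
    refine Finset.sum_congr rfl fun g _ => ?_
    rw [dotProduct_smul, smul_eq_mul, dotProduct_comm]
    ring
  have hbe : b ⬝ᵥ e = (G : ℝ)⁻¹ * ∑ g, s g * (c g ⬝ᵥ b) := by
    rw [hedef, dotProduct_smul, smul_eq_mul, my_dotProduct_sum]
    congr 1
    refine Finset.sum_congr rfl fun g _ => ?_
    rw [dotProduct_smul, smul_eq_mul, dotProduct_comm]
  have hQ : ((G : ℝ)⁻¹ • ∑ g, ω₂ g) ⬝ᵥ (Γ *ᵥ ((G : ℝ)⁻¹ • ∑ g, ω₂ g))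
      = (σ ^ 2)⁻¹ * (2 * ((G : ℝ)⁻¹ * ∑ g, s g * (c g ⬝ᵥ b))
        - (G : ℝ)⁻¹ * ∑ g, (c g ⬝ᵥ b) ^ 2) := by
    rw [hWsum, hΓ, Matrix.fromBlocks_mulVec, Matrix.dotProduct_block]
    simp only [Sum.elim_comp_inl, Sum.elim_comp_inr, Sum.elim_inl, Sum.elim_inr,
      Matrix.one_mulVec, Matrix.zero_mulVec, add_zero, Matrix.neg_mulVec,
      Matrix.smul_mulVec, Matrix.mulVec_smul, smul_zero, smul_neg,
      dotProduct_add, dotProduct_neg, dotProduct_smul,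
      smul_dotProduct, smul_eq_mul]
    rw [hbAb, hbe, dotProduct_comm e b, hbe]
    field_simp
    ring
  -- ω₃ sum
  have hT : (G : ℝ)⁻¹ * ∑ g, ω₃ g
      = (σ ^ 2)⁻¹ * ((G : ℝ)⁻¹ * ∑ g, (s g) ^ 2 - σ ^ 2) := by
    have : ∀ g, ω₃ g = (σ ^ 2)⁻¹ * ((s g) ^ 2 - σg2 g) := by
      intro g; rw [hω₃ g, hs]
    rw [Finset.sum_congr rfl fun g _ => this g, ← Finset.mul_sum,
      Finset.sum_sub_distrib]
    rw [hσ2]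
    ring
  rw [hL, hQ, hT]
  have hσ2pos : (0:ℝ) < σ ^ 2 := by positivity
  field_simp
  ring
end

section
/- Let $\omega_{1g}$ (scalar) and $\omega_{2g}$ ($\mathbb{R}^m$-valued) for $g=1,\ldots,G$ be mean-zero with the pairs $(\omega_{1g},\omega_{2g})$ independent across $g$, $\frac{1}{G}\sum_g E[\omega_{1g}^2] = 1$, and uniformly bounded fourth moments. Let $W_1 = \frac{1}{G}\sum_g \omega_{1g}$, $W_2 = \frac{1}{G}\sum_g \omega_{2g}$, and let $\Gamma$ be a fixed symmetric $m\times m$ matrix. Then $G\,E[W_1^2\, W_2'\Gamma W_2] = G^{-1}\left(\mu_{2,2} + 2\mu_{1,2}'\Gamma\mu_{1,2}\right) + O(G^{-2})$, where $\mu_{2,2} = \frac{1}{G}\sum_g E[\omega_{2g}'\Gamma\omega_{2g}]$ and $\mu_{1,2} = \frac{1}{G}\sum_g E[\omega_{1g}\omega_{2g}]$. -/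
open MeasureTheory ProbabilityTheory Matrix Finset

section Aux

variable {Ω : Type*} [MeasureSpace Ω] [IsProbabilityMeasure (ℙ : Measure Ω)]
  {m G : ℕ} {X : Fin G → Ω → ℝ × (Fin m → ℝ)}

lemma aux_vanish (hXm : ∀ g, Measurable (X g))
    (hind : iIndepFun X ℙ)
    (k : Fin G) (t : Finset (Fin G)) (hk : k ∉ t)
    (f : ℝ × (Fin m → ℝ) → ℝ) (hf : Measurable f) (hf0 : (∫ x, f (X k x)) = 0)
    (H : ((i : t) → ℝ × (Fin m → ℝ)) → ℝ) (hH : Measurable H) :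
    ∫ x, f (X k x) * H (fun i => X i x) = 0 := by
  have h1 : IndepFun (fun x (i : ({k} : Finset (Fin G))) => X i x)
      (fun x (i : t) => X i x) ℙ :=
    hind.indepFun_finset {k} t (Finset.disjoint_singleton_left.mpr hk) hXm
  have hφ : Measurable (fun F : ((i : ({k} : Finset (Fin G))) → ℝ × (Fin m → ℝ)) =>
      f (F ⟨k, Finset.mem_singleton_self k⟩)) := hf.comp (measurable_pi_apply _)
  have h2 : IndepFun (fun x => f (X k x)) (fun x => H (fun i => X i x)) ℙ := h1.comp hφ hH
  rw [h2.integral_fun_mul_eq_mul_integral ((hf.comp (hXm k)).aestronglyMeasurable)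
    ((hH.comp (measurable_pi_lambda _ fun i => hXm i)).aestronglyMeasurable), hf0, zero_mul]

lemma aux_pair (hXm : ∀ g, Measurable (X g))
    (hind : iIndepFun X ℙ)
    (g h : Fin G) (hgh : g ≠ h) (φ ψ : ℝ × (Fin m → ℝ) → ℝ)
    (hφ : Measurable φ) (hψ : Measurable ψ) :
    ∫ x, φ (X g x) * ψ (X h x) = (∫ x, φ (X g x)) * ∫ x, ψ (X h x) :=
  ((hind.indepFun hgh).comp hφ hψ).integral_fun_mul_eq_mul_integral
    ((hφ.comp (hXm g)).aestronglyMeasurable) ((hψ.comp (hXm h)).aestronglyMeasurable)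

lemma aux_quarter : (1 : ENNReal) / 2 = 1 / 4 + 1 / 4 := by
  rw [ENNReal.div_add_div_same]; norm_num
  rw [ENNReal.eq_div_iff (by norm_num) (by norm_num),
    show (4:ENNReal) = 2*2 by norm_num, mul_assoc,
    ENNReal.mul_inv_cancel (by norm_num) (by norm_num), mul_one]

lemma aux_half : (1 : ENNReal) / 1 = 1 / 2 + 1 / 2 := by
  rw [ENNReal.div_add_div_same]; norm_num
  exact (ENNReal.div_self (by norm_num) (by norm_num)).symm

lemma aux_mul_L2 {f g : Ω → ℝ} (hf : MemLp f 4 ℙ) (hg : MemLp g 4 ℙ) :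
    MemLp (fun x => f x * g x) 2 ℙ :=
  hg.smul (𝕜 := ℝ) hf (hpqr := ⟨by simpa only [one_div] using aux_quarter.symm⟩)

lemma aux_mul_int {f g : Ω → ℝ} (hf : MemLp f 2 ℙ) (hg : MemLp g 2 ℙ) :
    Integrable (fun x => f x * g x) ℙ :=
  (hg.smul (𝕜 := ℝ) hf (hpqr := ⟨by simpa only [one_div] using aux_half.symm⟩)).integrable le_rfl

lemma aux_amgm4 (a b c d : ℝ) : |a * b * c * d| ≤ (a^4 + b^4 + c^4 + d^4) / 4 := by
  rcases abs_cases (a * b * c * d) with ⟨h, _⟩ | ⟨h, _⟩ <;> rw [h] <;>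
    nlinarith [sq_nonneg (a*b - c*d), sq_nonneg (a*b + c*d), sq_nonneg (a^2 - b^2),
      sq_nonneg (c^2 - d^2), sq_nonneg (a*b), sq_nonneg (c*d)]

lemma aux_amgm2 (a b : ℝ) : |a * b| ≤ (a^4 + b^4 + 2) / 4 := by
  rcases abs_cases (a * b) with ⟨h, _⟩ | ⟨h, _⟩ <;> rw [h] <;>
    nlinarith [sq_nonneg (a - b), sq_nonneg (a + b), sq_nonneg (a*b - 1), sq_nonneg (a*b + 1),
      sq_nonneg (a^2 - b^2)]

lemma aux_sq_le (a : ℝ) : a^2 ≤ (a^4 + 1) / 2 := by nlinarith [sq_nonneg (a^2 - 1)]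

end Aux

section Aux2

lemma aux_dot_expand {m : ℕ} (Γ : Matrix (Fin m) (Fin m) ℝ) (v w : Fin m → ℝ) :
    v ⬝ᵥ (Γ *ᵥ w) = ∑ i, ∑ j, Γ i j * (v i * w j) := by
  simp only [dotProduct, Matrix.mulVec, Finset.mul_sum]
  exact Finset.sum_congr rfl fun i _ => Finset.sum_congr rfl fun j _ => by ring

lemma aux_sum_swap4 {M : Type*} [AddCommMonoid M] {a b : ℕ} (F : Fin a → Fin a → Fin b → Fin b → M) :
    ∑ i, ∑ j, ∑ g, ∑ h, F i j g h = ∑ g, ∑ h, ∑ i, ∑ j, F i j g h := by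
  have L : ∑ p : Fin a × Fin a, ∑ q : Fin b × Fin b, F p.1 p.2 q.1 q.2
      = ∑ i, ∑ j, ∑ g, ∑ h, F i j g h := by
    rw [Fintype.sum_prod_type' (f := fun i j => ∑ q : Fin b × Fin b, F i j q.1 q.2)]
    exact Finset.sum_congr rfl fun i _ => Finset.sum_congr rfl fun j _ =>
      Fintype.sum_prod_type' (f := fun g h => F i j g h)
  have R : ∑ q : Fin b × Fin b, ∑ p : Fin a × Fin a, F p.1 p.2 q.1 q.2
      = ∑ g, ∑ h, ∑ i, ∑ j, F i j g h := by
    rw [Fintype.sum_prod_type' (f := fun g h => ∑ p : Fin a × Fin a, F p.1 p.2 g h)]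
    exact Finset.sum_congr rfl fun g _ => Finset.sum_congr rfl fun h _ =>
      Fintype.sum_prod_type' (f := fun i j => F i j g h)
  rw [← L, ← R, Finset.sum_comm]

lemma aux_dot_sum {m : ℕ} (Γ : Matrix (Fin m) (Fin m) ℝ) {k : ℕ} (v w : Fin k → Fin m → ℝ) :
    (∑ g, v g) ⬝ᵥ (Γ *ᵥ ∑ g, w g) = ∑ g, ∑ h, v g ⬝ᵥ (Γ *ᵥ w h) := by
  simp only [aux_dot_expand]
  simp only [Finset.sum_apply, Finset.sum_mul, Finset.mul_sum]
  rw [aux_sum_swap4 (fun i j h g => Γ i j * (v g i * w h j))]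
  exact Finset.sum_comm

lemma aux_smul_dot {m : ℕ} (Γ : Matrix (Fin m) (Fin m) ℝ) (c : ℝ) (v w : Fin m → ℝ) :
    (c • v) ⬝ᵥ (Γ *ᵥ (c • w)) = c * (c * (v ⬝ᵥ (Γ *ᵥ w))) := by
  rw [smul_dotProduct, Matrix.mulVec_smul, dotProduct_smul,
    smul_eq_mul, smul_eq_mul]

variable {Ω : Type*} [MeasureSpace Ω] {m G : ℕ}

noncomputable def sJ (A : Fin G → Ω → ℝ) (B : Fin G → Ω → Fin m → ℝ)
    (g1 g2 g3 g4 : Fin G) (i j : Fin m) : ℝ :=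
  ∫ x, A g1 x * A g2 x * (B g3 x i * B g4 x j)

noncomputable def sT (Γ : Matrix (Fin m) (Fin m) ℝ) (A : Fin G → Ω → ℝ)
    (B : Fin G → Ω → Fin m → ℝ) (g1 g2 g3 g4 : Fin G) : ℝ :=
  ∑ i, ∑ j, Γ i j * sJ A B g1 g2 g3 g4 i j

noncomputable def sE2 (A : Fin G → Ω → ℝ) (g : Fin G) : ℝ := ∫ x, A g x ^ 2

noncomputable def sQ (Γ : Matrix (Fin m) (Fin m) ℝ) (B : Fin G → Ω → Fin m → ℝ)
    (g : Fin G) : ℝ := ∑ i, ∑ j, Γ i j * ∫ x, B g x i * B g x j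

noncomputable def sMu (A : Fin G → Ω → ℝ) (B : Fin G → Ω → Fin m → ℝ)
    (g : Fin G) : Fin m → ℝ := fun i => ∫ x, A g x * B g x i

noncomputable def sR (Γ : Matrix (Fin m) (Fin m) ℝ) (A : Fin G → Ω → ℝ)
    (B : Fin G → Ω → Fin m → ℝ) (g h : Fin G) : ℝ :=
  ∑ i, ∑ j, Γ i j * (sMu A B g i * sMu A B h j)

end Aux2

section Aux3

variable {Ω : Type*} [MeasureSpace Ω] [IsProbabilityMeasure (ℙ : Measure Ω)]
  {m G : ℕ} {A : Fin G → Ω → ℝ} {B : Fin G → Ω → Fin m → ℝ} {Γ : Matrix (Fin m) (Fin m) ℝ}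

lemma aux_J0_1 (hmeas : ∀ g, Measurable (fun x => (A g x, B g x)))
    (hind : iIndepFun (fun g x => (A g x, B g x)) ℙ)
    (hm1 : ∀ g, (∫ x, A g x) = 0)
    (g1 g2 g3 g4 : Fin G) (i j : Fin m)
    (h2 : g1 ≠ g2) (h3 : g1 ≠ g3) (h4 : g1 ≠ g4) :
    sJ A B g1 g2 g3 g4 i j = 0 := by
  simp only [sJ]
  rw [show (fun x => A g1 x * A g2 x * (B g3 x i * B g4 x j))
      = (fun x => A g1 x * (A g2 x * (B g3 x i * B g4 x j))) from funext fun x => by ring]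
  exact aux_vanish hmeas hind g1 {g2, g3, g4} (by simp [h2, h3, h4])
    (fun p => p.1) measurable_fst (hm1 g1)
    (fun F => (F ⟨g2, by simp⟩).1 * ((F ⟨g3, by simp⟩).2 i * (F ⟨g4, by simp⟩).2 j))
    ((measurable_fst.comp (measurable_pi_apply _)).fun_mul
      (((measurable_pi_apply i).comp (measurable_snd.comp (measurable_pi_apply _))).fun_mul
        ((measurable_pi_apply j).comp (measurable_snd.comp (measurable_pi_apply _)))))

lemma aux_J0_2 (hmeas : ∀ g, Measurable (fun x => (A g x, B g x)))
    (hind : iIndepFun (fun g x => (A g x, B g x)) ℙ)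
    (hm1 : ∀ g, (∫ x, A g x) = 0)
    (g1 g2 g3 g4 : Fin G) (i j : Fin m)
    (h1 : g2 ≠ g1) (h3 : g2 ≠ g3) (h4 : g2 ≠ g4) :
    sJ A B g1 g2 g3 g4 i j = 0 := by
  simp only [sJ]
  rw [show (fun x => A g1 x * A g2 x * (B g3 x i * B g4 x j))
      = (fun x => A g2 x * (A g1 x * (B g3 x i * B g4 x j))) from funext fun x => by ring]
  exact aux_vanish hmeas hind g2 {g1, g3, g4} (by simp [h1, h3, h4])
    (fun p => p.1) measurable_fst (hm1 g2)
    (fun F => (F ⟨g1, by simp⟩).1 * ((F ⟨g3, by simp⟩).2 i * (F ⟨g4, by simp⟩).2 j))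
    ((measurable_fst.comp (measurable_pi_apply _)).fun_mul
      (((measurable_pi_apply i).comp (measurable_snd.comp (measurable_pi_apply _))).fun_mul
        ((measurable_pi_apply j).comp (measurable_snd.comp (measurable_pi_apply _)))))

lemma aux_J0_3 (hmeas : ∀ g, Measurable (fun x => (A g x, B g x)))
    (hind : iIndepFun (fun g x => (A g x, B g x)) ℙ)
    (hm2 : ∀ g i, (∫ x, B g x i) = 0)
    (g1 g2 g3 g4 : Fin G) (i j : Fin m)
    (h1 : g3 ≠ g1) (h2 : g3 ≠ g2) (h4 : g3 ≠ g4) :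
    sJ A B g1 g2 g3 g4 i j = 0 := by
  simp only [sJ]
  rw [show (fun x => A g1 x * A g2 x * (B g3 x i * B g4 x j))
      = (fun x => B g3 x i * (A g1 x * (A g2 x * B g4 x j))) from funext fun x => by ring]
  exact aux_vanish hmeas hind g3 {g1, g2, g4} (by simp [h1, h2, h4])
    (fun p => p.2 i) ((measurable_pi_apply i).comp measurable_snd) (hm2 g3 i)
    (fun F => (F ⟨g1, by simp⟩).1 * ((F ⟨g2, by simp⟩).1 * (F ⟨g4, by simp⟩).2 j))
    ((measurable_fst.comp (measurable_pi_apply _)).fun_mul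
      ((measurable_fst.comp (measurable_pi_apply _)).fun_mul
        ((measurable_pi_apply j).comp (measurable_snd.comp (measurable_pi_apply _)))))

lemma aux_J0_4 (hmeas : ∀ g, Measurable (fun x => (A g x, B g x)))
    (hind : iIndepFun (fun g x => (A g x, B g x)) ℙ)
    (hm2 : ∀ g i, (∫ x, B g x i) = 0)
    (g1 g2 g3 g4 : Fin G) (i j : Fin m)
    (h1 : g4 ≠ g1) (h2 : g4 ≠ g2) (h3 : g4 ≠ g3) :
    sJ A B g1 g2 g3 g4 i j = 0 := by
  simp only [sJ]
  rw [show (fun x => A g1 x * A g2 x * (B g3 x i * B g4 x j))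
      = (fun x => B g4 x j * (A g1 x * (A g2 x * B g3 x i))) from funext fun x => by ring]
  exact aux_vanish hmeas hind g4 {g1, g2, g3} (by simp [h1, h2, h3])
    (fun p => p.2 j) ((measurable_pi_apply j).comp measurable_snd) (hm2 g4 j)
    (fun F => (F ⟨g1, by simp⟩).1 * ((F ⟨g2, by simp⟩).1 * (F ⟨g3, by simp⟩).2 i))
    ((measurable_fst.comp (measurable_pi_apply _)).fun_mul
      ((measurable_fst.comp (measurable_pi_apply _)).fun_mul
        ((measurable_pi_apply i).comp (measurable_snd.comp (measurable_pi_apply _)))))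

lemma aux_T0 (hmeas : ∀ g, Measurable (fun x => (A g x, B g x)))
    (hind : iIndepFun (fun g x => (A g x, B g x)) ℙ)
    (hm1 : ∀ g, (∫ x, A g x) = 0) (hm2 : ∀ g i, (∫ x, B g x i) = 0)
    (g1 g2 g3 g4 : Fin G)
    (h : (g1 ≠ g2 ∧ g1 ≠ g3 ∧ g1 ≠ g4) ∨ (g2 ≠ g1 ∧ g2 ≠ g3 ∧ g2 ≠ g4) ∨
      (g3 ≠ g1 ∧ g3 ≠ g2 ∧ g3 ≠ g4) ∨ (g4 ≠ g1 ∧ g4 ≠ g2 ∧ g4 ≠ g3)) :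
    sT Γ A B g1 g2 g3 g4 = 0 := by
  have hJ : ∀ i j, sJ A B g1 g2 g3 g4 i j = 0 := by
    intro i j
    rcases h with ⟨a, b, c⟩ | ⟨a, b, c⟩ | ⟨a, b, c⟩ | ⟨a, b, c⟩
    · exact aux_J0_1 hmeas hind hm1 g1 g2 g3 g4 i j a b c
    · exact aux_J0_2 hmeas hind hm1 g1 g2 g3 g4 i j a b c
    · exact aux_J0_3 hmeas hind hm2 g1 g2 g3 g4 i j a b c
    · exact aux_J0_4 hmeas hind hm2 g1 g2 g3 g4 i j a b c
  simp [sT, hJ]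

lemma aux_Tb (hmeas : ∀ g, Measurable (fun x => (A g x, B g x)))
    (hind : iIndepFun (fun g x => (A g x, B g x)) ℙ)
    (g h : Fin G) (hgh : g ≠ h) :
    sT Γ A B g g h h = sE2 A g * sQ Γ B h := by
  simp only [sT, sQ, sE2, Finset.mul_sum]
  refine Finset.sum_congr rfl fun i _ => Finset.sum_congr rfl fun j _ => ?_
  have key : (∫ x, A g x * A g x * (B h x i * B h x j))
      = (∫ x, A g x * A g x) * ∫ x, B h x i * B h x j :=
    aux_pair hmeas hind g h hgh (fun p => p.1 * p.1) (fun p => p.2 i * p.2 j)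
      (measurable_fst.mul measurable_fst)
      (((measurable_pi_apply i).comp measurable_snd).mul
        ((measurable_pi_apply j).comp measurable_snd))
  have hsq : (∫ x, A g x * A g x) = ∫ x, A g x ^ 2 := by
    congr 1; funext x; ring
  simp only [sJ]
  rw [key, hsq]; ring

lemma aux_Tc (hmeas : ∀ g, Measurable (fun x => (A g x, B g x)))
    (hind : iIndepFun (fun g x => (A g x, B g x)) ℙ)
    (g1 g2 : Fin G) (hgh : g1 ≠ g2) :
    sT Γ A B g1 g2 g1 g2 = sR Γ A B g1 g2 := by
  simp only [sT, sR, sMu]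
  refine Finset.sum_congr rfl fun i _ => Finset.sum_congr rfl fun j _ => ?_
  have key : (∫ x, A g1 x * B g1 x i * (A g2 x * B g2 x j))
      = (∫ x, A g1 x * B g1 x i) * ∫ x, A g2 x * B g2 x j :=
    aux_pair hmeas hind g1 g2 hgh (fun p => p.1 * p.2 i) (fun p => p.1 * p.2 j)
      (measurable_fst.mul ((measurable_pi_apply i).comp measurable_snd))
      (measurable_fst.mul ((measurable_pi_apply j).comp measurable_snd))
  simp only [sJ]
  rw [show (fun x => A g1 x * A g2 x * (B g1 x i * B g2 x j))
      = (fun x => A g1 x * B g1 x i * (A g2 x * B g2 x j)) from funext fun x => by ring]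
  rw [key]

lemma aux_Td (hmeas : ∀ g, Measurable (fun x => (A g x, B g x)))
    (hind : iIndepFun (fun g x => (A g x, B g x)) ℙ)
    (g1 g2 : Fin G) (hgh : g1 ≠ g2) :
    sT Γ A B g1 g2 g2 g1 = sR Γ A B g2 g1 := by
  simp only [sT, sR, sMu]
  refine Finset.sum_congr rfl fun i _ => Finset.sum_congr rfl fun j _ => ?_
  have key : (∫ x, A g2 x * B g2 x i * (A g1 x * B g1 x j))
      = (∫ x, A g2 x * B g2 x i) * ∫ x, A g1 x * B g1 x j :=
    aux_pair hmeas hind g2 g1 hgh.symm (fun p => p.1 * p.2 i) (fun p => p.1 * p.2 j)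
      (measurable_fst.mul ((measurable_pi_apply i).comp measurable_snd))
      (measurable_fst.mul ((measurable_pi_apply j).comp measurable_snd))
  simp only [sJ]
  rw [show (fun x => A g1 x * A g2 x * (B g2 x i * B g1 x j))
      = (fun x => A g2 x * B g2 x i * (A g1 x * B g1 x j)) from funext fun x => by ring]
  rw [key]

end Aux3

section Aux4

variable {Ω : Type*} [MeasureSpace Ω] [IsProbabilityMeasure (ℙ : Measure Ω)]
  {m G : ℕ} {A : Fin G → Ω → ℝ} {B : Fin G → Ω → Fin m → ℝ} {Γ : Matrix (Fin m) (Fin m) ℝ}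

lemma aux_Tdecomp (hmeas : ∀ g, Measurable (fun x => (A g x, B g x)))
    (hind : iIndepFun (fun g x => (A g x, B g x)) ℙ)
    (hm1 : ∀ g, (∫ x, A g x) = 0) (hm2 : ∀ g i, (∫ x, B g x i) = 0)
    (g1 g2 g3 g4 : Fin G) :
    sT Γ A B g1 g2 g3 g4 =
      (if g3 = g4 then (if g1 = g2 then sE2 A g1 * sQ Γ B g3 else 0) else 0)
      + (if g2 = g4 then (if g1 = g3 then sR Γ A B g1 g2 else 0) else 0)
      + (if g2 = g3 then (if g1 = g4 then sR Γ A B g2 g1 else 0) else 0)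
      + (if g2 = g1 then (if g3 = g1 then (if g4 = g1 then
          (sT Γ A B g1 g1 g1 g1 - sE2 A g1 * sQ Γ B g1 - 2 * sR Γ A B g1 g1)
          else 0) else 0) else 0) := by
  by_cases h12 : g1 = g2
  · subst h12
    by_cases h34 : g3 = g4
    · subst h34
      by_cases h13 : g1 = g3
      · subst h13
        simp only [eq_self_iff_true, if_true]
        ring
      · simp [h13, Ne.symm h13]
        exact aux_Tb hmeas hind g1 g3 h13
    · by_cases h13 : g1 = g3
      · subst h13
        simp [h34, Ne.symm h34]
        exact aux_T0 hmeas hind hm1 hm2 _ _ _ _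
          (Or.inr (Or.inr (Or.inr ⟨Ne.symm h34, Ne.symm h34, Ne.symm h34⟩)))
      · simp [h34, h13, Ne.symm h13]
        exact aux_T0 hmeas hind hm1 hm2 _ _ _ _
          (Or.inr (Or.inr (Or.inl ⟨Ne.symm h13, Ne.symm h13, h34⟩)))
  · by_cases h13 : g1 = g3
    · by_cases h24 : g2 = g4
      · subst h13; subst h24
        simp [h12, Ne.symm h12]
        exact aux_Tc hmeas hind g1 g2 h12
      · subst h13
        by_cases h14 : g1 = g4
        · subst h14
          simp [h12, Ne.symm h12]
          exact aux_T0 hmeas hind hm1 hm2 _ _ _ _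
            (Or.inr (Or.inl ⟨Ne.symm h12, Ne.symm h12, Ne.symm h12⟩))
        · simp [h12, Ne.symm h12, h24, h14]
          exact aux_T0 hmeas hind hm1 hm2 _ _ _ _
            (Or.inr (Or.inr (Or.inr ⟨Ne.symm h14, Ne.symm h24, Ne.symm h14⟩)))
    · by_cases h14 : g1 = g4
      · by_cases h23 : g2 = g3
        · subst h14; subst h23
          simp [h12, Ne.symm h12]
          exact aux_Td hmeas hind g1 g2 h12
        · subst h14
          simp [h12, Ne.symm h12, h23, h13, Ne.symm h13]
          exact aux_T0 hmeas hind hm1 hm2 _ _ _ _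
            (Or.inr (Or.inr (Or.inl ⟨Ne.symm h13, Ne.symm h23, Ne.symm h13⟩)))
      · simp [h12, h13, h14, Ne.symm h12]
        exact aux_T0 hmeas hind hm1 hm2 _ _ _ _ (Or.inl ⟨h12, h13, h14⟩)

end Aux4

section Aux5

variable {Ω : Type*} [MeasureSpace Ω] [IsProbabilityMeasure (ℙ : Measure Ω)]

lemma aux_abs_integral (f : Ω → ℝ) : |∫ x, f x| ≤ ∫ x, |f x| := by
  simpa [Real.norm_eq_abs] using norm_integral_le_integral_norm (μ := (ℙ : Measure Ω)) f

lemma aux_int_swap2 {ι κ : Type*} [Fintype ι] [Fintype κ] {F : ι → κ → Ω → ℝ}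
    (h : ∀ i j, Integrable (F i j) ℙ) :
    ∫ x, ∑ i, ∑ j, F i j x = ∑ i, ∑ j, ∫ x, F i j x := by
  rw [integral_finset_sum _ fun i _ => integrable_finset_sum _ fun j _ => h i j]
  exact Finset.sum_congr rfl fun i _ => integral_finset_sum _ fun j _ => h i j

lemma aux_int_swap4 {ι : Type*} [Fintype ι] {F : ι → ι → ι → ι → Ω → ℝ}
    (h : ∀ a b c d, Integrable (F a b c d) ℙ) :
    ∫ x, ∑ a, ∑ b, ∑ c, ∑ d, F a b c d x = ∑ a, ∑ b, ∑ c, ∑ d, ∫ x, F a b c d x := by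
  have h3 : ∀ a b c, Integrable (fun x => ∑ d, F a b c d x) ℙ := fun a b c =>
    integrable_finset_sum _ fun d _ => h a b c d
  have h2 : ∀ a b, Integrable (fun x => ∑ c, ∑ d, F a b c d x) ℙ := fun a b =>
    integrable_finset_sum _ fun c _ => h3 a b c
  have h1 : ∀ a, Integrable (fun x => ∑ b, ∑ c, ∑ d, F a b c d x) ℙ := fun a =>
    integrable_finset_sum _ fun b _ => h2 a b
  rw [integral_finset_sum _ fun a _ => h1 a]
  refine Finset.sum_congr rfl fun a _ => ?_
  rw [integral_finset_sum _ fun b _ => h2 a b]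
  refine Finset.sum_congr rfl fun b _ => ?_
  exact aux_int_swap2 fun c d => h a b c d

variable {m G : ℕ} {A : Fin G → Ω → ℝ} {B : Fin G → Ω → Fin m → ℝ} {Γ : Matrix (Fin m) (Fin m) ℝ}

lemma aux_integrable4 (hA4 : ∀ g, MemLp (A g) 4 ℙ) (hB4 : ∀ g i, MemLp (fun x => B g x i) 4 ℙ)
    (g1 g2 g3 g4 : Fin G) (i j : Fin m) :
    Integrable (fun x => A g1 x * A g2 x * (B g3 x i * B g4 x j)) ℙ :=
  aux_mul_int (aux_mul_L2 (hA4 g1) (hA4 g2)) (aux_mul_L2 (hB4 g3 i) (hB4 g4 j))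

lemma aux_prod_expand (g1 g2 g3 g4 : Fin G) :
    (fun x => A g1 x * A g2 x * (B g3 x ⬝ᵥ (Γ *ᵥ B g4 x)))
      = fun x => ∑ i, ∑ j, Γ i j * (A g1 x * A g2 x * (B g3 x i * B g4 x j)) :=
  funext fun x => by
    rw [aux_dot_expand, Finset.mul_sum]
    refine Finset.sum_congr rfl fun i _ => ?_
    rw [Finset.mul_sum]
    exact Finset.sum_congr rfl fun j _ => by ring

lemma aux_intdot (hA4 : ∀ g, MemLp (A g) 4 ℙ) (hB4 : ∀ g i, MemLp (fun x => B g x i) 4 ℙ)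
    (g1 g2 g3 g4 : Fin G) :
    Integrable (fun x => A g1 x * A g2 x * (B g3 x ⬝ᵥ (Γ *ᵥ B g4 x))) ℙ := by
  rw [aux_prod_expand]
  exact integrable_finset_sum _ fun i _ => integrable_finset_sum _ fun j _ =>
    (aux_integrable4 hA4 hB4 g1 g2 g3 g4 i j).const_mul (Γ i j)

lemma aux_Tint (hA4 : ∀ g, MemLp (A g) 4 ℙ) (hB4 : ∀ g i, MemLp (fun x => B g x i) 4 ℙ)
    (g1 g2 g3 g4 : Fin G) :
    ∫ x, A g1 x * A g2 x * (B g3 x ⬝ᵥ (Γ *ᵥ B g4 x)) = sT Γ A B g1 g2 g3 g4 := by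
  rw [aux_prod_expand, aux_int_swap2 (fun i j =>
    (aux_integrable4 hA4 hB4 g1 g2 g3 g4 i j).const_mul (Γ i j))]
  simp only [sT, sJ]
  exact Finset.sum_congr rfl fun i _ => Finset.sum_congr rfl fun j _ =>
    integral_const_mul _ _

end Aux5

section Aux6

variable {Ω : Type*} [MeasureSpace Ω] [IsProbabilityMeasure (ℙ : Measure Ω)]

lemma aux_pow4_int {f : Ω → ℝ} (hf : MemLp f 4 ℙ) : Integrable (fun x => f x ^ 4) ℙ := by
  have h := aux_mul_int (aux_mul_L2 hf hf) (aux_mul_L2 hf hf)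
  exact h.congr (Filter.Eventually.of_forall fun x => by ring)

lemma aux_prod2_bound {C : ℝ} {f g : Ω → ℝ} (hf : MemLp f 4 ℙ) (hg : MemLp g 4 ℙ)
    (hfC : (∫ x, f x ^ 4) ≤ C) (hgC : (∫ x, g x ^ 4) ≤ C) :
    |∫ x, f x * g x| ≤ (C + 1) / 2 := by
  have hint : Integrable (fun x => f x * g x) ℙ :=
    aux_mul_int (hf.mono_exponent (by norm_num)) (hg.mono_exponent (by norm_num))
  refine (aux_abs_integral _).trans ?_
  have h1 : (∫ x, |f x * g x|) ≤ ∫ x, (f x ^ 4 + g x ^ 4 + 2) / 4 := by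
    refine integral_mono hint.abs ?_ fun x => aux_amgm2 (f x) (g x)
    exact (((aux_pow4_int hf).add (aux_pow4_int hg)).add (integrable_const 2)).div_const 4
  refine h1.trans ?_
  have hfg : Integrable (fun x => f x ^ 4 + g x ^ 4) ℙ := (aux_pow4_int hf).add (aux_pow4_int hg)
  rw [integral_div, integral_add hfg (integrable_const 2),
    integral_add (aux_pow4_int hf) (aux_pow4_int hg), integral_const]
  simp only [measure_univ, probReal_univ, ENNReal.toReal_one, smul_eq_mul, one_mul]
  linarith

lemma aux_sq_bound {C : ℝ} {f : Ω → ℝ} (hf : MemLp f 4 ℙ) (hfC : (∫ x, f x ^ 4) ≤ C) :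
    (∫ x, f x ^ 2) ≤ (C + 1) / 2 := by
  have hint : Integrable (fun x => f x ^ 2) ℙ := by
    have h := aux_mul_int (hf.mono_exponent (by norm_num : (2:ENNReal) ≤ 4))
      (hf.mono_exponent (by norm_num : (2:ENNReal) ≤ 4))
    exact h.congr (Filter.Eventually.of_forall fun x => by ring)
  have h1 : (∫ x, f x ^ 2) ≤ ∫ x, (f x ^ 4 + 1) / 2 := by
    refine integral_mono hint ?_ fun x => aux_sq_le (f x)
    exact ((aux_pow4_int hf).add (integrable_const 1)).div_const 2
  refine h1.trans ?_
  rw [integral_div, integral_add (aux_pow4_int hf) (integrable_const 1), integral_const]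
  simp only [measure_univ, probReal_univ, ENNReal.toReal_one, smul_eq_mul, one_mul]
  linarith

lemma aux_gamma_sum_bound {m : ℕ} (Γ : Matrix (Fin m) (Fin m) ℝ) (f : Fin m → Fin m → ℝ)
    {c : ℝ} (hf : ∀ i j, |f i j| ≤ c) :
    |∑ i, ∑ j, Γ i j * f i j| ≤ (∑ i, ∑ j, |Γ i j|) * c := by
  refine (Finset.abs_sum_le_sum_abs _ _).trans ?_
  refine le_trans (Finset.sum_le_sum fun i _ => Finset.abs_sum_le_sum_abs _ _) ?_
  rw [Finset.sum_mul]
  refine Finset.sum_le_sum fun i _ => ?_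
  rw [Finset.sum_mul]
  refine Finset.sum_le_sum fun j _ => ?_
  rw [abs_mul]
  exact mul_le_mul_of_nonneg_left (hf i j) (abs_nonneg _)

end Aux6

section Aux7

variable {Ω : Type*} [MeasureSpace Ω] [IsProbabilityMeasure (ℙ : Measure Ω)]
  {m G : ℕ} {A : Fin G → Ω → ℝ} {B : Fin G → Ω → Fin m → ℝ} {Γ : Matrix (Fin m) (Fin m) ℝ}

lemma aux_abs_pow4 (f : Ω → ℝ) : (∫ x, |f x| ^ 4) = ∫ x, f x ^ 4 :=
  integral_congr_ae (Filter.Eventually.of_forall fun x => by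
    show |f x| ^ 4 = f x ^ 4
    rw [pow_abs, abs_of_nonneg (by positivity)])

lemma aux_J_bound (hA4 : ∀ g, MemLp (A g) 4 ℙ) (hB4 : ∀ g i, MemLp (fun x => B g x i) 4 ℙ)
    {C : ℝ} (hC1 : ∀ g, (∫ x, A g x ^ 4) ≤ C) (hC2' : ∀ g i, (∫ x, B g x i ^ 4) ≤ C)
    (g1 g2 g3 g4 : Fin G) (i j : Fin m) :
    |sJ A B g1 g2 g3 g4 i j| ≤ C := by
  simp only [sJ]
  refine (aux_abs_integral _).trans ?_
  have hint := aux_integrable4 hA4 hB4 g1 g2 g3 g4 i j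
  have hb1 : Integrable (fun x => A g1 x ^ 4 + A g2 x ^ 4) ℙ :=
    (aux_pow4_int (hA4 g1)).add (aux_pow4_int (hA4 g2))
  have hb2 : Integrable (fun x => A g1 x ^ 4 + A g2 x ^ 4 + B g3 x i ^ 4) ℙ :=
    hb1.add (aux_pow4_int (hB4 g3 i))
  have hb3 : Integrable (fun x => A g1 x ^ 4 + A g2 x ^ 4 + B g3 x i ^ 4 + B g4 x j ^ 4) ℙ :=
    hb2.add (aux_pow4_int (hB4 g4 j))
  have h1 : (∫ x, |A g1 x * A g2 x * (B g3 x i * B g4 x j)|)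
      ≤ ∫ x, (A g1 x ^ 4 + A g2 x ^ 4 + B g3 x i ^ 4 + B g4 x j ^ 4) / 4 := by
    refine integral_mono hint.abs (hb3.div_const 4) fun x => ?_
    rw [← mul_assoc]
    exact aux_amgm4 _ _ _ _
  refine h1.trans ?_
  rw [integral_div, integral_add hb2 (aux_pow4_int (hB4 g4 j)),
    integral_add hb1 (aux_pow4_int (hB4 g3 i)),
    integral_add (aux_pow4_int (hA4 g1)) (aux_pow4_int (hA4 g2))]
  have := hC1 g1; have := hC1 g2; have := hC2' g3 i; have := hC2' g4 j
  linarith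

lemma aux_Qint (hB4 : ∀ g i, MemLp (fun x => B g x i) 4 ℙ) (g : Fin G) :
    (∫ x, B g x ⬝ᵥ (Γ *ᵥ B g x)) = sQ Γ B g := by
  have hpt : (fun x => B g x ⬝ᵥ (Γ *ᵥ B g x))
      = fun x => ∑ i, ∑ j, Γ i j * (B g x i * B g x j) :=
    funext fun x => aux_dot_expand Γ _ _
  rw [hpt, aux_int_swap2 (fun i j =>
    (aux_mul_int ((hB4 g i).mono_exponent (by norm_num))
      ((hB4 g j).mono_exponent (by norm_num))).const_mul (Γ i j))]
  simp only [sQ]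
  exact Finset.sum_congr rfl fun i _ => Finset.sum_congr rfl fun j _ =>
    integral_const_mul _ _

lemma aux_assembly (hmeas : ∀ g, Measurable (fun x => (A g x, B g x)))
    (hind : iIndepFun (fun g x => (A g x, B g x)) ℙ)
    (hm1 : ∀ g, (∫ x, A g x) = 0) (hm2 : ∀ g i, (∫ x, B g x i) = 0) :
    ∑ g1, ∑ g2, ∑ g3, ∑ g4, sT Γ A B g1 g2 g3 g4
      = (∑ g, sE2 A g) * (∑ g, sQ Γ B g) + 2 * (∑ g, ∑ h, sR Γ A B g h)
        + ∑ g, (sT Γ A B g g g g - sE2 A g * sQ Γ B g - 2 * sR Γ A B g g) := by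
  have step : ∑ g1, ∑ g2, ∑ g3, ∑ g4, sT Γ A B g1 g2 g3 g4
      = ∑ g1, ∑ g2, ∑ g3, ∑ g4,
        ((if g3 = g4 then (if g1 = g2 then sE2 A g1 * sQ Γ B g3 else 0) else 0)
        + (if g2 = g4 then (if g1 = g3 then sR Γ A B g1 g2 else 0) else 0)
        + (if g2 = g3 then (if g1 = g4 then sR Γ A B g2 g1 else 0) else 0)
        + (if g2 = g1 then (if g3 = g1 then (if g4 = g1 then
            (sT Γ A B g1 g1 g1 g1 - sE2 A g1 * sQ Γ B g1 - 2 * sR Γ A B g1 g1)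
            else 0) else 0) else 0)) :=
    Finset.sum_congr rfl fun g1 _ => Finset.sum_congr rfl fun g2 _ =>
      Finset.sum_congr rfl fun g3 _ => Finset.sum_congr rfl fun g4 _ =>
        aux_Tdecomp hmeas hind hm1 hm2 g1 g2 g3 g4
  rw [step]
  simp only [Finset.sum_add_distrib, Finset.sum_ite_irrel, Finset.sum_ite_eq,
    Finset.sum_ite_eq', Finset.mem_univ, if_true, Finset.sum_const_zero]
  rw [show (∑ g1, ∑ g2, sR Γ A B g2 g1) = ∑ g1, ∑ g2, sR Γ A B g1 g2 from Finset.sum_comm]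
  rw [← Finset.sum_mul_sum]
  ring

lemma aux_lhs (hA4 : ∀ g, MemLp (A g) 4 ℙ) (hB4 : ∀ g i, MemLp (fun x => B g x i) 4 ℙ) :
    (∫ x, ((G : ℝ)⁻¹ * ∑ g, A g x) ^ 2 *
      (((G : ℝ)⁻¹ • ∑ g, B g x) ⬝ᵥ (Γ *ᵥ ((G : ℝ)⁻¹ • ∑ g, B g x))))
    = ((G : ℝ) ^ 4)⁻¹ * ∑ g1, ∑ g2, ∑ g3, ∑ g4, sT Γ A B g1 g2 g3 g4 := by
  have hpt : ∀ x, ((G : ℝ)⁻¹ * ∑ g, A g x) ^ 2 *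
      (((G : ℝ)⁻¹ • ∑ g, B g x) ⬝ᵥ (Γ *ᵥ ((G : ℝ)⁻¹ • ∑ g, B g x)))
      = ((G : ℝ) ^ 4)⁻¹ * ∑ g1, ∑ g2, ∑ g3, ∑ g4,
          (A g1 x * A g2 x * (B g3 x ⬝ᵥ (Γ *ᵥ B g4 x))) := by
    intro x
    have e1 : (∑ g, A g x) * (∑ g, A g x) * (∑ g, ∑ h, B g x ⬝ᵥ (Γ *ᵥ B h x))
        = ∑ g1, ∑ g2, ∑ g3, ∑ g4, (A g1 x * A g2 x * (B g3 x ⬝ᵥ (Γ *ᵥ B g4 x))) := by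
      simp only [Finset.sum_mul, Finset.mul_sum]
      rw [aux_sum_swap4 (fun c d b a => A a x * A b x * (B c x ⬝ᵥ (Γ *ᵥ B d x)))]
      exact Finset.sum_comm
    rw [aux_smul_dot, aux_dot_sum, ← e1]
    ring
  simp only [hpt]
  rw [integral_const_mul, aux_int_swap4 (fun a b c d => aux_intdot hA4 hB4 a b c d)]
  exact congrArg _ (Finset.sum_congr rfl fun g1 _ => Finset.sum_congr rfl fun g2 _ =>
    Finset.sum_congr rfl fun g3 _ => Finset.sum_congr rfl fun g4 _ =>
      aux_Tint hA4 hB4 g1 g2 g3 g4)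

end Aux7

section AuxMain

variable {Ω : Type*} [MeasureSpace Ω] [IsProbabilityMeasure (ℙ : Measure Ω)]

lemma aux_main {m : ℕ} (Γ : Matrix (Fin m) (Fin m) ℝ) {G : ℕ} (hG : 1 ≤ G)
    (A : Fin G → Ω → ℝ) (B : Fin G → Ω → Fin m → ℝ)
    (hmeas : ∀ g, Measurable (fun x => (A g x, B g x)))
    (hind : iIndepFun (fun g x => (A g x, B g x)) ℙ)
    (hA4 : ∀ g, MemLp (A g) 4 ℙ) (hB4 : ∀ g i, MemLp (fun x => B g x i) 4 ℙ)
    (hm1 : ∀ g, (∫ x, A g x) = 0) (hm2 : ∀ g i, (∫ x, B g x i) = 0)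
    (C : ℝ) (hC0 : 0 ≤ C) (hC1 : ∀ g, (∫ x, A g x ^ 4) ≤ C)
    (hC2 : ∀ g i, (∫ x, |B g x i| ^ 4) ≤ C)
    (hnorm : (G : ℝ)⁻¹ * ∑ g, (∫ x, A g x ^ 2) = 1) :
    |(G : ℝ) * (∫ x, ((G : ℝ)⁻¹ * ∑ g, A g x) ^ 2 *
          (((G : ℝ)⁻¹ • ∑ g, B g x) ⬝ᵥ (Γ *ᵥ ((G : ℝ)⁻¹ • ∑ g, B g x))))
        - (G : ℝ)⁻¹ * (((G : ℝ)⁻¹ * ∑ g, ∫ x, B g x ⬝ᵥ (Γ *ᵥ B g x))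
            + 2 * (((G : ℝ)⁻¹ • ∑ g, fun i => ∫ x, A g x * B g x i) ⬝ᵥ
                (Γ *ᵥ ((G : ℝ)⁻¹ • ∑ g, fun i => ∫ x, A g x * B g x i))))|
      ≤ ((∑ i, ∑ j, |Γ i j|) * (C + 3 * ((C + 1) / 2) ^ 2)) * ((G : ℝ) ^ 2)⁻¹ := by
  have hGpos : (0 : ℝ) < G := by
    have : 0 < G := lt_of_lt_of_le zero_lt_one hG
    exact_mod_cast this
  have hGne : (G : ℝ) ≠ 0 := ne_of_gt hGpos
  have hC2' : ∀ g i, (∫ x, B g x i ^ 4) ≤ C := fun g i => by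
    rw [← aux_abs_pow4]; exact hC2 g i
  have hC₀nn : (0 : ℝ) ≤ ∑ i, ∑ j, |Γ i j| :=
    Finset.sum_nonneg fun i _ => Finset.sum_nonneg fun j _ => abs_nonneg _
  have hCp : (0 : ℝ) ≤ (C + 1) / 2 := by linarith
  -- closed forms
  have hqsum : (∑ g, ∫ x, B g x ⬝ᵥ (Γ *ᵥ B g x)) = ∑ g, sQ Γ B g :=
    Finset.sum_congr rfl fun g _ => aux_Qint hB4 g
  have hmu : (((G : ℝ)⁻¹ • ∑ g, fun i => ∫ x, A g x * B g x i) ⬝ᵥ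
      (Γ *ᵥ ((G : ℝ)⁻¹ • ∑ g, fun i => ∫ x, A g x * B g x i)))
      = ((G : ℝ) ^ 2)⁻¹ * ∑ g, ∑ h, sR Γ A B g h := by
    have h0 : (∑ g, fun i => ∫ x, A g x * B g x i : Fin m → ℝ) = ∑ g, sMu A B g := rfl
    rw [h0, aux_smul_dot, aux_dot_sum]
    have hgh : ∀ g h : Fin G, sMu A B g ⬝ᵥ (Γ *ᵥ sMu A B h) = sR Γ A B g h := fun g h => by
      rw [aux_dot_expand]; rfl
    simp only [hgh]
    ring
  have hsumE2 : (∑ g, sE2 A g) = (G : ℝ) := by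
    simp only [sE2]
    field_simp at hnorm
    linarith
  -- bounds
  have hTdiag : ∀ g, |sT Γ A B g g g g| ≤ (∑ i, ∑ j, |Γ i j|) * C := fun g => by
    simp only [sT]
    exact aux_gamma_sum_bound Γ _ fun i j => aux_J_bound hA4 hB4 hC1 hC2' g g g g i j
  have hQb : ∀ g, |sQ Γ B g| ≤ (∑ i, ∑ j, |Γ i j|) * ((C + 1) / 2) := fun g => by
    simp only [sQ]
    exact aux_gamma_sum_bound Γ _ fun i j =>
      aux_prod2_bound (hB4 g i) (hB4 g j) (hC2' g i) (hC2' g j)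
  have hE2b : ∀ g, |sE2 A g| ≤ (C + 1) / 2 := fun g => by
    simp only [sE2]
    rw [abs_of_nonneg (integral_nonneg fun x => by positivity)]
    exact aux_sq_bound (hA4 g) (hC1 g)
  have hRb : ∀ g h, |sR Γ A B g h| ≤ (∑ i, ∑ j, |Γ i j|) * ((C + 1) / 2 * ((C + 1) / 2)) :=
    fun g h => by
      simp only [sR, sMu]
      refine aux_gamma_sum_bound Γ _ fun i j => ?_
      rw [abs_mul]
      exact mul_le_mul (aux_prod2_bound (hA4 g) (hB4 g i) (hC1 g) (hC2' g i))
        (aux_prod2_bound (hA4 h) (hB4 h j) (hC1 h) (hC2' h j)) (abs_nonneg _) hCp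
  have hΔb : ∀ g, |sT Γ A B g g g g - sE2 A g * sQ Γ B g - 2 * sR Γ A B g g|
      ≤ (∑ i, ∑ j, |Γ i j|) * (C + 3 * ((C + 1) / 2) ^ 2) := fun g => by
    have h1 := hTdiag g
    have h2 := hE2b g
    have h3 := hQb g
    have h4 := hRb g g
    have e1 : |sE2 A g * sQ Γ B g| ≤ ((C + 1) / 2) * ((∑ i, ∑ j, |Γ i j|) * ((C + 1) / 2)) := by
      rw [abs_mul]
      exact mul_le_mul h2 h3 (abs_nonneg _) hCp
    calc |sT Γ A B g g g g - sE2 A g * sQ Γ B g - 2 * sR Γ A B g g|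
        ≤ |sT Γ A B g g g g - sE2 A g * sQ Γ B g| + |2 * sR Γ A B g g| := abs_sub _ _
      _ ≤ |sT Γ A B g g g g| + |sE2 A g * sQ Γ B g| + |2 * sR Γ A B g g| := by
          have := abs_sub (sT Γ A B g g g g) (sE2 A g * sQ Γ B g)
          linarith
      _ = |sT Γ A B g g g g| + |sE2 A g * sQ Γ B g| + 2 * |sR Γ A B g g| := by
          rw [abs_mul (2:ℝ) (sR Γ A B g g), abs_two]
      _ ≤ (∑ i, ∑ j, |Γ i j|) * C
            + (C + 1) / 2 * ((∑ i, ∑ j, |Γ i j|) * ((C + 1) / 2))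
            + 2 * ((∑ i, ∑ j, |Γ i j|) * ((C + 1) / 2 * ((C + 1) / 2))) := by
          have h6 : 2 * |sR Γ A B g g|
              ≤ 2 * ((∑ i, ∑ j, |Γ i j|) * ((C + 1) / 2 * ((C + 1) / 2))) := by linarith
          exact add_le_add (add_le_add h1 e1) h6
      _ = (∑ i, ∑ j, |Γ i j|) * (C + 3 * ((C + 1) / 2) ^ 2) := by ring
  -- main computation
  rw [aux_lhs hA4 hB4, hqsum, hmu, aux_assembly hmeas hind hm1 hm2, hsumE2]
  have hkey : (G : ℝ) * (((G : ℝ) ^ 4)⁻¹ *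
        ((G : ℝ) * (∑ g, sQ Γ B g) + 2 * (∑ g, ∑ h, sR Γ A B g h)
          + ∑ g, (sT Γ A B g g g g - sE2 A g * sQ Γ B g - 2 * sR Γ A B g g)))
      - (G : ℝ)⁻¹ * (((G : ℝ)⁻¹ * ∑ g, sQ Γ B g)
          + 2 * (((G : ℝ) ^ 2)⁻¹ * ∑ g, ∑ h, sR Γ A B g h))
      = ((G : ℝ) ^ 3)⁻¹ * ∑ g, (sT Γ A B g g g g - sE2 A g * sQ Γ B g - 2 * sR Γ A B g g) := by
    field_simp
    ring
  rw [hkey, abs_mul, abs_of_nonneg (by positivity : (0:ℝ) ≤ ((G : ℝ) ^ 3)⁻¹)]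
  have hsumΔ : |∑ g, (sT Γ A B g g g g - sE2 A g * sQ Γ B g - 2 * sR Γ A B g g)|
      ≤ (G : ℝ) * ((∑ i, ∑ j, |Γ i j|) * (C + 3 * ((C + 1) / 2) ^ 2)) := by
    refine (Finset.abs_sum_le_sum_abs _ _).trans ?_
    refine (Finset.sum_le_sum fun g _ => hΔb g).trans ?_
    rw [Finset.sum_const, Finset.card_univ, Fintype.card_fin, nsmul_eq_mul]
  calc ((G : ℝ) ^ 3)⁻¹ * |∑ g, (sT Γ A B g g g g - sE2 A g * sQ Γ B g - 2 * sR Γ A B g g)|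
      ≤ ((G : ℝ) ^ 3)⁻¹ * ((G : ℝ) * ((∑ i, ∑ j, |Γ i j|) * (C + 3 * ((C + 1) / 2) ^ 2))) :=
        mul_le_mul_of_nonneg_left hsumΔ (by positivity)
    _ = ((∑ i, ∑ j, |Γ i j|) * (C + 3 * ((C + 1) / 2) ^ 2)) * ((G : ℝ) ^ 2)⁻¹ := by
        field_simp

end AuxMain

/-- For a triangular array of mean-zero scores `(ω₁ G g, ω₂ G g)`,
independent across `g` for each `G`, with uniformly bounded fourth moments and the
normalization `(1/G) ∑ g E[ω₁²] = 1`, one has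
`G E[W₁² W₂'Γ W₂] = G⁻¹ (μ₂₂ + 2 μ₁₂'Γ μ₁₂) + O(G⁻²)`, where
`μ₂₂ = (1/G)∑ E[ω₂'Γω₂]` and `μ₁₂ = (1/G)∑ E[ω₁ ω₂]`. -/
theorem second_moment_studentization_term
    {Ω : Type*} [MeasureSpace Ω] [IsProbabilityMeasure (ℙ : Measure Ω)]
    (m : ℕ) (Γ : Matrix (Fin m) (Fin m) ℝ) (hΓ : Γ.IsSymm)
    (ω₁ : (G : ℕ) → Fin G → Ω → ℝ)
    (ω₂ : (G : ℕ) → Fin G → Ω → (Fin m → ℝ))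
    (hmeas : ∀ G g, Measurable (fun x => (ω₁ G g x, ω₂ G g x)))
    (hindep : ∀ G : ℕ, iIndepFun
        (fun (g : Fin G) (x : Ω) => (ω₁ G g x, ω₂ G g x)) ℙ)
    (hL4 : ∀ G g, MemLp (ω₁ G g) 4 ℙ)
    (hL4' : ∀ G g i, MemLp (fun x => ω₂ G g x i) 4 ℙ)
    (hmean1 : ∀ G g, (∫ x, ω₁ G g x) = 0)
    (hmean2 : ∀ G g i, (∫ x, ω₂ G g x i) = 0)
    (C : ℝ)
    (hC1 : ∀ G g, (∫ x, ω₁ G g x ^ 4) ≤ C)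
    (hC2 : ∀ G g i, (∫ x, |ω₂ G g x i| ^ 4) ≤ C)
    (hnorm : ∀ G : ℕ, 1 ≤ G → (G : ℝ)⁻¹ * ∑ g, (∫ x, ω₁ G g x ^ 2) = 1) :
    ∃ C' : ℝ, ∀ G : ℕ, 1 ≤ G →
      |(G : ℝ) * (∫ x, ((G : ℝ)⁻¹ * ∑ g, ω₁ G g x) ^ 2 *
            (((G : ℝ)⁻¹ • ∑ g, ω₂ G g x) ⬝ᵥ (Γ *ᵥ ((G : ℝ)⁻¹ • ∑ g, ω₂ G g x))))
          - (G : ℝ)⁻¹ * (((G : ℝ)⁻¹ * ∑ g, ∫ x, ω₂ G g x ⬝ᵥ (Γ *ᵥ ω₂ G g x))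
              + 2 * (((G : ℝ)⁻¹ • ∑ g, fun i => ∫ x, ω₁ G g x * ω₂ G g x i) ⬝ᵥ
                  (Γ *ᵥ ((G : ℝ)⁻¹ • ∑ g, fun i => ∫ x, ω₁ G g x * ω₂ G g x i))))|
        ≤ C' * ((G : ℝ) ^ 2)⁻¹ := by
  have hC0 : 0 ≤ C := le_trans (integral_nonneg fun x => by positivity) (hC1 1 0)
  refine ⟨(∑ i, ∑ j, |Γ i j|) * (C + 3 * ((C + 1) / 2) ^ 2), fun G hG => ?_⟩
  exact aux_main Γ hG (ω₁ G) (ω₂ G) (hmeas G) (hindep G) (hL4 G) (hL4' G)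
    (hmean1 G) (hmean2 G) C hC0 (hC1 G) (hC2 G) (hnorm G hG)
end
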